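/- Let A be a complex unital algebra, x₁,…,xₙ ∈ A, p ∈ ℂ⟨X₁,…,Xₙ⟩ with linearization L_p = b₀⊗1 + Σ bⱼ⊗Xⱼ ∈ M_N(ℂ⟨X⟩), and set P := p(x₁,…,xₙ) and L_P := b₀⊗1 + Σ bⱼ⊗xⱼ ∈ M_N(A). Then for z ∈ ℂ, z·1 − P is invertible in A if and only if Λ(z) − L_P is invertible in M_N(A), where Λ(z) is the matrix with (1,1)-entry z and all other entries 0; and in that case the (1,1)-entry of (Λ(z) − L_P)⁻¹ equals (z − P)⁻¹. -/

import Mathlib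

open Matrix

section SchurRing

variable {l m n α : Type*} [Fintype l] [Fintype m] [Fintype n]
variable [DecidableEq l] [DecidableEq m] [DecidableEq n] [Ring α]

theorem myFromBlocks_eq_of_invertible₁₁ (A : Matrix m m α) (B : Matrix m n α) (C : Matrix l m α)
    (D : Matrix l n α) [Invertible A] :
    fromBlocks A B C D =
      (fromBlocks 1 0 (C * ⅟ A) 1 : Matrix (m ⊕ l) (m ⊕ l) α) * (fromBlocks A 0 0 (D - C * ⅟ A * B) : Matrix (m ⊕ l) (m ⊕ n) α) *
        (fromBlocks 1 (⅟ A * B) 0 1 : Matrix (m ⊕ n) (m ⊕ n) α) := by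
  simp only [fromBlocks_multiply, Matrix.mul_zero, Matrix.zero_mul, zero_add, add_zero,
      Matrix.neg_mul, Matrix.mul_neg, invOf_mul_self, mul_invOf_self,
      Matrix.invOf_mul_cancel_right, Matrix.mul_invOf_cancel_right,
      Matrix.invOf_mul_cancel_left, Matrix.mul_invOf_cancel_left, Matrix.mul_one, Matrix.one_mul,
      neg_add_cancel, add_neg_cancel, neg_zero, neg_neg, sub_add_cancel, Matrix.mul_assoc,
      fromBlocks_one]
  rw [show C * (⅟A * B) + (D - C * (⅟A * B)) = D by abel]

theorem myFromBlocks_eq_of_invertible₂₂ (A : Matrix l m α) (B : Matrix l n α) (C : Matrix n m α)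
    (D : Matrix n n α) [Invertible D] :
    fromBlocks A B C D =
      (fromBlocks 1 (B * ⅟ D) 0 1 : Matrix (l ⊕ n) (l ⊕ n) α) * (fromBlocks (A - B * ⅟ D * C) 0 0 D : Matrix (l ⊕ n) (m ⊕ n) α) *
        (fromBlocks 1 0 (⅟ D * C) 1 : Matrix (m ⊕ n) (m ⊕ n) α) := by
  simp only [fromBlocks_multiply, Matrix.mul_zero, Matrix.zero_mul, zero_add, add_zero,
      Matrix.neg_mul, Matrix.mul_neg, invOf_mul_self, mul_invOf_self,
      Matrix.invOf_mul_cancel_right, Matrix.mul_invOf_cancel_right,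
      Matrix.invOf_mul_cancel_left, Matrix.mul_invOf_cancel_left, Matrix.mul_one, Matrix.one_mul,
      neg_add_cancel, add_neg_cancel, neg_zero, neg_neg, sub_add_cancel, Matrix.mul_assoc,
      fromBlocks_one]

/-- Port of `Matrix.fromBlocksZero₂₁Invertible` to noncommutative rings. -/
def myFromBlocksZero₂₁Invertible (A : Matrix m m α) (B : Matrix m n α) (D : Matrix n n α)
    [Invertible A] [Invertible D] : Invertible (fromBlocks A B 0 D) :=
  ⟨fromBlocks (⅟ A) (-(⅟ A * B * ⅟ D)) 0 (⅟ D), by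
    simp only [fromBlocks_multiply, Matrix.mul_zero, Matrix.zero_mul, zero_add, add_zero,
      Matrix.neg_mul, Matrix.mul_neg, invOf_mul_self, mul_invOf_self,
      Matrix.invOf_mul_cancel_right, Matrix.mul_invOf_cancel_right,
      Matrix.invOf_mul_cancel_left, Matrix.mul_invOf_cancel_left, Matrix.mul_one, Matrix.one_mul,
      neg_add_cancel, add_neg_cancel, neg_zero, neg_neg, sub_add_cancel, Matrix.mul_assoc,
      fromBlocks_one], by
    simp only [fromBlocks_multiply, Matrix.mul_zero, Matrix.zero_mul, zero_add, add_zero,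
      Matrix.neg_mul, Matrix.mul_neg, invOf_mul_self, mul_invOf_self,
      Matrix.invOf_mul_cancel_right, Matrix.mul_invOf_cancel_right,
      Matrix.invOf_mul_cancel_left, Matrix.mul_invOf_cancel_left, Matrix.mul_one, Matrix.one_mul,
      neg_add_cancel, add_neg_cancel, neg_zero, neg_neg, sub_add_cancel, Matrix.mul_assoc,
      fromBlocks_one]⟩

/-- Port of `Matrix.fromBlocksZero₁₂Invertible` to noncommutative rings. -/
def myFromBlocksZero₁₂Invertible (A : Matrix m m α) (C : Matrix n m α) (D : Matrix n n α)
    [Invertible A] [Invertible D] : Invertible (fromBlocks A 0 C D) :=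
  ⟨fromBlocks (⅟ A) 0 (-(⅟ D * C * ⅟ A)) (⅟ D), by
    simp only [fromBlocks_multiply, Matrix.mul_zero, Matrix.zero_mul, zero_add, add_zero,
      Matrix.neg_mul, Matrix.mul_neg, invOf_mul_self, mul_invOf_self,
      Matrix.invOf_mul_cancel_right, Matrix.mul_invOf_cancel_right,
      Matrix.invOf_mul_cancel_left, Matrix.mul_invOf_cancel_left, Matrix.mul_one, Matrix.one_mul,
      neg_add_cancel, add_neg_cancel, neg_zero, neg_neg, sub_add_cancel, Matrix.mul_assoc,
      fromBlocks_one], by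
    simp only [fromBlocks_multiply, Matrix.mul_zero, Matrix.zero_mul, zero_add, add_zero,
      Matrix.neg_mul, Matrix.mul_neg, invOf_mul_self, mul_invOf_self,
      Matrix.invOf_mul_cancel_right, Matrix.mul_invOf_cancel_right,
      Matrix.invOf_mul_cancel_left, Matrix.mul_invOf_cancel_left, Matrix.mul_one, Matrix.one_mul,
      neg_add_cancel, add_neg_cancel, neg_zero, neg_neg, sub_add_cancel, Matrix.mul_assoc,
      fromBlocks_one]⟩

/-- Invertibility of the first block of an invertible block-diagonal matrix. -/
def myInvertibleOfBlockDiagInvertible (A : Matrix m m α) (D : Matrix n n α)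
    [Invertible (fromBlocks A 0 0 D)] : Invertible A := by
  refine ⟨(⅟ (fromBlocks A 0 0 D)).toBlocks₁₁, ?_, ?_⟩
  · have := invOf_mul_self (fromBlocks A 0 0 D)
    rw [← fromBlocks_toBlocks (⅟ (fromBlocks A 0 0 D)), fromBlocks_multiply] at this
    replace := congr_arg Matrix.toBlocks₁₁ this
    simpa only [Matrix.toBlocks_fromBlocks₁₁, Matrix.mul_zero, add_zero, ← fromBlocks_one] using
      this
  · have := mul_invOf_self (fromBlocks A 0 0 D)
    rw [← fromBlocks_toBlocks (⅟ (fromBlocks A 0 0 D)), fromBlocks_multiply] at this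
    replace := congr_arg Matrix.toBlocks₁₁ this
    simpa only [Matrix.toBlocks_fromBlocks₁₁, Matrix.zero_mul, add_zero, ← fromBlocks_one] using
      this

/-- Port of `Matrix.fromBlocks₂₂Invertible` to noncommutative rings. -/
def myFromBlocks₂₂Invertible (A : Matrix m m α) (B : Matrix m n α) (C : Matrix n m α)
    (D : Matrix n n α) [Invertible D] [Invertible (A - B * ⅟ D * C)] :
    Invertible (fromBlocks A B C D) := by
  convert Invertible.copy' _ _ (fromBlocks (⅟ (A - B * ⅟ D * C)) (-(⅟ (A - B * ⅟ D * C) * B * ⅟ D))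
    (-(⅟ D * C * ⅟ (A - B * ⅟ D * C))) (⅟ D + ⅟ D * C * ⅟ (A - B * ⅟ D * C) * B * ⅟ D))
      (myFromBlocks_eq_of_invertible₂₂ _ _ _ _) _
  · letI : Invertible (1 : Matrix n n α) := invertibleOne
    letI : Invertible (1 : Matrix m m α) := invertibleOne
    refine Invertible.mul ?_ (myFromBlocksZero₁₂Invertible _ _ _)
    exact
      Invertible.mul (myFromBlocksZero₂₁Invertible _ _ _)
        (myFromBlocksZero₂₁Invertible _ _ _)
  · show
      _ =
        (fromBlocks 1 0 (-((1 : Matrix n n α) * (⅟ D * C) * (1 : Matrix m m α))) 1 : Matrix (m ⊕ n) (m ⊕ n) α) *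
          (fromBlocks (⅟ (A - B * ⅟ D * C)) (-(⅟ (A - B * ⅟ D * C) * (0 : Matrix m n α) * ⅟ D)) 0 (⅟ D) *
            fromBlocks 1 (-((1 : Matrix m m α) * (B * ⅟ D) * (1 : Matrix n n α))) 0 1)
    simp only [fromBlocks_multiply, Matrix.mul_zero, Matrix.zero_mul, zero_add, add_zero,
      Matrix.neg_mul, Matrix.mul_neg, invOf_mul_self, mul_invOf_self,
      Matrix.invOf_mul_cancel_right, Matrix.mul_invOf_cancel_right,
      Matrix.invOf_mul_cancel_left, Matrix.mul_invOf_cancel_left, Matrix.mul_one, Matrix.one_mul,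
      neg_add_cancel, add_neg_cancel, neg_zero, neg_neg, sub_add_cancel, Matrix.mul_assoc,
      fromBlocks_one, add_comm (⅟D)]

theorem myInvOf_fromBlocks₂₂_eq (A : Matrix m m α) (B : Matrix m n α) (C : Matrix n m α)
    (D : Matrix n n α) [Invertible D] [Invertible (A - B * ⅟ D * C)]
    [Invertible (fromBlocks A B C D)] :
    ⅟ (fromBlocks A B C D) =
      fromBlocks (⅟ (A - B * ⅟ D * C)) (-(⅟ (A - B * ⅟ D * C) * B * ⅟ D))
        (-(⅟ D * C * ⅟ (A - B * ⅟ D * C))) (⅟ D + ⅟ D * C * ⅟ (A - B * ⅟ D * C) * B * ⅟ D) := by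
  letI := myFromBlocks₂₂Invertible A B C D
  convert (rfl : ⅟ (fromBlocks A B C D) = _)
  exact rfl

/-- Port of `Matrix.invertibleOfFromBlocks₂₂Invertible` to noncommutative rings. -/
def myInvertibleOfFromBlocks₂₂Invertible (A : Matrix m m α) (B : Matrix m n α) (C : Matrix n m α)
    (D : Matrix n n α) [Invertible D] [Invertible (fromBlocks A B C D)] :
    Invertible (A - B * ⅟ D * C) := by
  suffices Invertible (fromBlocks (A - B * ⅟ D * C) 0 0 D) by
    exact myInvertibleOfBlockDiagInvertible (A - B * ⅟ D * C) D
  letI : Invertible (1 : Matrix n n α) := invertibleOne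
  letI : Invertible (1 : Matrix m m α) := invertibleOne
  letI iDC : Invertible (fromBlocks 1 0 (⅟ D * C) 1 : Matrix (m ⊕ n) (m ⊕ n) α) :=
    myFromBlocksZero₁₂Invertible _ _ _
  letI iBD : Invertible (fromBlocks 1 (B * ⅟ D) 0 1 : Matrix (m ⊕ n) (m ⊕ n) α) :=
    myFromBlocksZero₂₁Invertible _ _ _
  letI iBDC := Invertible.copy ‹_› _ (myFromBlocks_eq_of_invertible₂₂ A B C D).symm
  refine (iBD.mulLeft _).symm ?_
  exact (iDC.mulRight _).symm iBDC

theorem myIsUnit_fromBlocks_iff_of_invertible₂₂ {A : Matrix m m α} {B : Matrix m n α}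
    {C : Matrix n m α} {D : Matrix n n α} [Invertible D] :
    IsUnit (fromBlocks A B C D) ↔ IsUnit (A - B * ⅟ D * C) := by
  constructor
  · intro h
    cases h.nonempty_invertible
    letI := myInvertibleOfFromBlocks₂₂Invertible A B C D
    exact isUnit_of_invertible _
  · intro h
    cases h.nonempty_invertible
    letI := myFromBlocks₂₂Invertible A B C D
    exact isUnit_of_invertible _

end SchurRing

/-- The ring equivalence between `1 × 1` matrices and their unique entry. -/
def oneByOneEquiv (A : Type*) [Ring A] : Matrix Unit Unit A ≃+* A where
  toFun M := M () ()
  invFun a := Matrix.of fun _ _ => a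
  left_inv M := by ext i j; rfl
  right_inv a := rfl
  map_add' M N := rfl
  map_mul' M N := by simp [Matrix.mul_apply]

theorem ringEquiv_isUnit_iff {R S : Type*} [Ring R] [Ring S] (e : R ≃+* S) (a : R) :
    IsUnit a ↔ IsUnit (e a) := by
  constructor
  · exact fun h => h.map e
  · intro h
    have := h.map e.symm
    simpa using this

theorem ring_inverse_eq {R : Type*} [Ring R] {a b : R} (h1 : a * b = 1) (h2 : b * a = 1) :
    Ring.inverse a = b := by
  letI : Invertible a := ⟨b, h2, h1⟩
  rw [Ring.inverse_invertible]
  exact (invOf_eq_right_inv h1).symm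

theorem ringEquiv_ring_inverse {R S : Type*} [Ring R] [Ring S] (e : R ≃+* S) (a : R) :
    Ring.inverse (e a) = e (Ring.inverse a) := by
  by_cases h : IsUnit a
  · have h1 : a * Ring.inverse a = 1 := Ring.mul_inverse_cancel a h
    have h2 : Ring.inverse a * a = 1 := Ring.inverse_mul_cancel a h
    refine ring_inverse_eq ?_ ?_
    · rw [← RingEquiv.map_mul, h1, RingEquiv.map_one]
    · rw [← RingEquiv.map_mul, h2, RingEquiv.map_one]
  · rw [Ring.inverse_non_unit _ h, Ring.inverse_non_unit, map_zero]
    exact fun hu => h ((ringEquiv_isUnit_iff e a).mpr hu)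

/-- The linear pencil `L = b₀ ⊗ 1 + ∑ⱼ bⱼ ⊗ Xⱼ` over the free algebra. -/
noncomputable def linMat (n m : ℕ) (b₀ : Matrix (Unit ⊕ Fin m) (Unit ⊕ Fin m) ℂ)
    (b : Fin n → Matrix (Unit ⊕ Fin m) (Unit ⊕ Fin m) ℂ) :
    Matrix (Unit ⊕ Fin m) (Unit ⊕ Fin m) (FreeAlgebra ℂ (Fin n)) :=
  Matrix.of fun i j =>
    algebraMap ℂ (FreeAlgebra ℂ (Fin n)) (b₀ i j) +
      ∑ k : Fin n, b k i j • FreeAlgebra.ι ℂ k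

/-- Given a linearization `L_p` of `p` and elements `x₁,…,xₙ` of a complex unital
algebra, `z − P` is invertible iff `Λ(z) − L_P` is, and in that case the
`(1,1)`-entry of `(Λ(z) − L_P)⁻¹` equals `(z − P)⁻¹`. -/
theorem linearization_resolvent {A : Type*} [Ring A] [Algebra ℂ A] (n m : ℕ)
    (x : Fin n → A) (p : FreeAlgebra ℂ (Fin n))
    (b₀ : Matrix (Unit ⊕ Fin m) (Unit ⊕ Fin m) ℂ)
    (b : Fin n → Matrix (Unit ⊕ Fin m) (Unit ⊕ Fin m) ℂ)
    (Q' : Matrix (Fin m) (Fin m) (FreeAlgebra ℂ (Fin n)))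
    (h11 : linMat n m b₀ b (Sum.inl ()) (Sum.inl ()) = 0)
    (hQ : (Matrix.of fun i j : Fin m =>
      linMat n m b₀ b (Sum.inr i) (Sum.inr j)) * Q' = 1)
    (hQ' : Q' * (Matrix.of fun i j : Fin m =>
      linMat n m b₀ b (Sum.inr i) (Sum.inr j)) = 1)
    (hp : p = -∑ i : Fin m, ∑ j : Fin m,
      linMat n m b₀ b (Sum.inl ()) (Sum.inr i) * Q' i j *
        linMat n m b₀ b (Sum.inr j) (Sum.inl ()))
    (z : ℂ) :
    (IsUnit (algebraMap ℂ A z - FreeAlgebra.lift ℂ x p) ↔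
      IsUnit ((Matrix.of fun i j : Unit ⊕ Fin m =>
          if i = Sum.inl () ∧ j = Sum.inl () then algebraMap ℂ A z else 0) -
        (linMat n m b₀ b).map (FreeAlgebra.lift ℂ x))) ∧
    (IsUnit (algebraMap ℂ A z - FreeAlgebra.lift ℂ x p) →
      Ring.inverse ((Matrix.of fun i j : Unit ⊕ Fin m =>
          if i = Sum.inl () ∧ j = Sum.inl () then algebraMap ℂ A z else 0) -
        (linMat n m b₀ b).map (FreeAlgebra.lift ℂ x)) (Sum.inl ()) (Sum.inl ()) =
      Ring.inverse (algebraMap ℂ A z - FreeAlgebra.lift ℂ x p)) := by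
  classical
  set F : FreeAlgebra ℂ (Fin n) →+* A := (FreeAlgebra.lift ℂ x : FreeAlgebra ℂ (Fin n) →ₐ[ℂ] A).toRingHom with hF
  have hFapp : ∀ q, (FreeAlgebra.lift ℂ x) q = F q := fun q => rfl
  set L := linMat n m b₀ b with hL
  set za : A := algebraMap ℂ A z with hza
  -- blocks
  set Az : Matrix Unit Unit A := Matrix.of fun _ _ => za with hAz
  set u : Matrix Unit (Fin m) A := Matrix.of fun _ j => F (L (Sum.inl ()) (Sum.inr j)) with hu
  set v : Matrix (Fin m) Unit A := Matrix.of fun i _ => F (L (Sum.inr i) (Sum.inl ())) with hv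
  set Qm : Matrix (Fin m) (Fin m) A :=
    (Matrix.of fun i j : Fin m => L (Sum.inr i) (Sum.inr j)).map F with hQm
  set Qi : Matrix (Fin m) (Fin m) A := Q'.map F with hQi
  have hmul1 : Qm * Qi = 1 := by
    have := congr_arg (F.mapMatrix : Matrix (Fin m) (Fin m) _ →+* Matrix (Fin m) (Fin m) A) hQ
    simpa using this
  have hmul2 : Qi * Qm = 1 := by
    have := congr_arg (F.mapMatrix : Matrix (Fin m) (Fin m) _ →+* Matrix (Fin m) (Fin m) A) hQ'
    simpa using this
  letI : Invertible Qm := ⟨Qi, hmul2, hmul1⟩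
  letI : Invertible (-Qm) := invertibleNeg Qm
  have hQiinv : ⅟Qm = Qi := invOf_eq_right_inv hmul1
  -- the big matrix as a block matrix
  set M : Matrix (Unit ⊕ Fin m) (Unit ⊕ Fin m) A :=
    (Matrix.of fun i j : Unit ⊕ Fin m =>
      if i = Sum.inl () ∧ j = Sum.inl () then za else 0) -
        L.map (FreeAlgebra.lift ℂ x) with hM
  have hblocks : M = Matrix.fromBlocks Az (-u) (-v) (-Qm) := by
    ext i j
    rcases i with i | i <;> rcases j with j | j <;>
      simp [hM, hAz, hu, hv, hQm, Matrix.fromBlocks, hFapp, h11]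
  -- the Schur complement
  have hSchur : Az - (-u) * ⅟(-Qm) * (-v) = Az + u * Qi * v := by
    rw [invOf_neg, hQiinv]
    simp [Matrix.neg_mul, Matrix.mul_neg, sub_neg_eq_add]
  -- the (1,1) entry of the Schur complement is `z - P`
  set e := oneByOneEquiv A with he
  have hentry : e (Az + u * Qi * v) = za - F p := by
    have : F p = -∑ i : Fin m, ∑ j : Fin m,
        F (L (Sum.inl ()) (Sum.inr i)) * F (Q' i j) * F (L (Sum.inr j) (Sum.inl ())) := by
      rw [hp]
      simp [map_sum, _root_.map_mul]
    rw [this]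
    show (Az + u * Qi * v) () () = za - _
    have hmul : (u * Qi * v) () () =
        ∑ i : Fin m, ∑ j : Fin m,
          F (L (Sum.inl ()) (Sum.inr i)) * F (Q' i j) * F (L (Sum.inr j) (Sum.inl ())) := by
      rw [Matrix.mul_apply]
      simp_rw [Matrix.mul_apply, Finset.sum_mul]
      rw [Finset.sum_comm]
      simp [hu, hv, hQi]
    simp [Matrix.add_apply, hAz, hmul, sub_neg_eq_add]
  have hPF : (FreeAlgebra.lift ℂ x) p = F p := rfl
  -- main invertibility equivalence
  have hiff : IsUnit (za - F p) ↔ IsUnit M := by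
    rw [hblocks, myIsUnit_fromBlocks_iff_of_invertible₂₂, hSchur,
      ringEquiv_isUnit_iff e, hentry]
  constructor
  · rw [hPF]
    exact hiff
  · rw [hPF]
    intro h
    have hS : IsUnit (Az - (-u) * ⅟(-Qm) * (-v)) := by
      rw [hSchur, ringEquiv_isUnit_iff e, hentry]; exact h
    cases hS.nonempty_invertible
    letI instFB : Invertible (Matrix.fromBlocks Az (-u) (-v) (-Qm)) :=
      myFromBlocks₂₂Invertible _ _ _ _
    have hRM : Ring.inverse M = ⅟(Matrix.fromBlocks Az (-u) (-v) (-Qm)) := by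
      rw [hblocks, Ring.inverse_invertible]
    rw [hRM, myInvOf_fromBlocks₂₂_eq]
    have h1 : (Matrix.fromBlocks (⅟(Az - (-u) * ⅟(-Qm) * (-v)))
        (-(⅟(Az - (-u) * ⅟(-Qm) * (-v)) * (-u) * ⅟(-Qm)))
        (-(⅟(-Qm) * (-v) * ⅟(Az - (-u) * ⅟(-Qm) * (-v))))
        (⅟(-Qm) + ⅟(-Qm) * (-v) * ⅟(Az - (-u) * ⅟(-Qm) * (-v)) * (-u) * ⅟(-Qm)))
        (Sum.inl ()) (Sum.inl ()) = ⅟(Az - (-u) * ⅟(-Qm) * (-v)) () () := rfl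
    rw [h1]
    -- relate to Ring.inverse of the scalar
    have h2 : e (Az - (-u) * ⅟(-Qm) * (-v)) = za - F p := by rw [hSchur, hentry]
    have h3 : Ring.inverse (za - F p) = e (Ring.inverse (Az - (-u) * ⅟(-Qm) * (-v))) := by
      rw [← h2, ringEquiv_ring_inverse]
    rw [h3, Ring.inverse_invertible]
    rfl
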